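/- Let ℓ > 0 and c > 0 with 4c − ℓ² > 0, and define K : ℝ\{0} → ℝ by K(x) = −(2ℓ/√(2π)) ∫₀^∞ y e^{−|x|y}/((c−y²)² + ℓ²y²) dy + (2√(2π)/√(4c−ℓ²)) e^{−(√(4c−ℓ²)/2)|x|} cos(ℓx/2). Then lim_{|x|→∞} x² K(x) = −2ℓ/(c²√(2π)). -/

import Mathlib

open MeasureTheory Filter Set

theorem aux_main (ℓ c : ℝ) (hℓ : 0 < ℓ) (hc : 0 < c) (hd : 0 < 4 * c - ℓ ^ 2) :
    Tendsto (fun t : ℝ => t ^ 2 *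
      ∫ y in Set.Ioi (0:ℝ), y * Real.exp (-t * y) / ((c - y ^ 2) ^ 2 + ℓ ^ 2 * y ^ 2))
      atTop (nhds ((c ^ 2)⁻¹)) := by
  set Q : ℝ → ℝ := fun y => (c - y ^ 2) ^ 2 + ℓ ^ 2 * y ^ 2 with hQdef
  set δ : ℝ := ℓ ^ 2 * (4 * c - ℓ ^ 2) / 4 with hδdef
  have hδ : 0 < δ := by positivity
  have hQ : ∀ y : ℝ, δ ≤ Q y := by
    intro y
    simp only [hQdef, hδdef]
    nlinarith [sq_nonneg (y ^ 2 + (ℓ ^ 2 - 2 * c) / 2)]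
  have hQpos : ∀ y : ℝ, 0 < Q y := fun y => lt_of_lt_of_le hδ (hQ y)
  have hQcont : Continuous Q := by fun_prop
  -- step 1: substitution
  have hsub : ∀ t : ℝ, 0 < t →
      t ^ 2 * (∫ y in Set.Ioi (0:ℝ), y * Real.exp (-t * y) / Q y)
        = ∫ u in Set.Ioi (0:ℝ), u * Real.exp (-u) / Q (u / t) := by
    intro t ht
    have h := integral_comp_mul_left_Ioi (fun u => u * Real.exp (-u) / Q (u / t)) 0 ht
    simp only [mul_zero] at h
    have h2 : (∫ y in Set.Ioi (0:ℝ), (t * y) * Real.exp (-(t * y)) / Q ((t * y) / t))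
        = t⁻¹ • ∫ u in Set.Ioi (0:ℝ), u * Real.exp (-u) / Q (u / t) := h
    have h3 : (∫ y in Set.Ioi (0:ℝ), (t * y) * Real.exp (-(t * y)) / Q ((t * y) / t))
        = t * ∫ y in Set.Ioi (0:ℝ), y * Real.exp (-t * y) / Q y := by
      rw [← integral_const_mul]
      refine setIntegral_congr_fun measurableSet_Ioi (fun y _ => ?_)
      rw [mul_comm t y, mul_div_cancel_right₀ y ht.ne', show -(y*t) = -t*y by ring]
      ring
    rw [h3, smul_eq_mul] at h2
    rw [show (∫ u in Set.Ioi (0:ℝ), u * Real.exp (-u) / Q (u / t))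
        = t * (t * ∫ y in Set.Ioi (0:ℝ), y * Real.exp (-t * y) / Q y) by
      rw [h2]; field_simp]
    ring
  -- integrability of u * exp(-u)
  have hbase : IntegrableOn (fun u : ℝ => u * Real.exp (-u)) (Set.Ioi 0) := by
    have := Real.GammaIntegral_convergent (s := 2) (by norm_num)
    refine this.congr_fun (fun u hu => ?_) measurableSet_Ioi
    rw [show (2:ℝ) - 1 = 1 by norm_num]; simp only [Real.rpow_one]; ring
  -- step 2: dominated convergence
  have hdom : Tendsto (fun t : ℝ => ∫ u in Set.Ioi (0:ℝ), u * Real.exp (-u) / Q (u / t))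
      atTop (nhds (∫ u in Set.Ioi (0:ℝ), u * Real.exp (-u) / Q 0)) := by
    refine tendsto_integral_filter_of_dominated_convergence
      (fun u => u * Real.exp (-u) / δ) ?_ ?_ ?_ ?_
    · filter_upwards with t
      exact (Continuous.aestronglyMeasurable (by fun_prop (disch := intros; exact (hQpos _).ne')))
    · filter_upwards [eventually_gt_atTop (0:ℝ)] with t ht
      rw [ae_restrict_iff' measurableSet_Ioi]
      filter_upwards with u hu
      have hu0 : (0:ℝ) < u := hu
      rw [Real.norm_eq_abs, abs_of_nonneg (by positivity)]
      exact div_le_div_of_nonneg_left (by positivity) hδ (hQ _)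
    · exact (hbase.div_const δ)
    · filter_upwards with u
      have h1 : Tendsto (fun t : ℝ => u / t) atTop (nhds 0) :=
        tendsto_const_nhds.div_atTop tendsto_id
      have h2 : ContinuousAt (fun s => u * Real.exp (-u) / Q s) 0 := by
        exact (continuousAt_const).div (hQcont.continuousAt) (hQpos 0).ne'
      exact h2.tendsto.comp h1
  have hval : (∫ u in Set.Ioi (0:ℝ), u * Real.exp (-u) / Q 0) = (c ^ 2)⁻¹ := by
    have hQ0 : Q 0 = c ^ 2 := by simp [hQdef]
    have hg : (∫ u in Set.Ioi (0:ℝ), u * Real.exp (-u)) = 1 := by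
      have h2 : Real.Gamma 2 = ∫ x in Set.Ioi (0:ℝ), Real.exp (-x) * x ^ ((2:ℝ) - 1) :=
        Real.Gamma_eq_integral (by norm_num)
      have hG2 : Real.Gamma 2 = 1 := by
        rw [show (2:ℝ) = 1 + 1 by norm_num, Real.Gamma_add_one one_ne_zero, Real.Gamma_one]
        ring
      rw [hG2] at h2
      rw [← h2.symm]
      refine setIntegral_congr_fun measurableSet_Ioi (fun u hu => ?_)
      rw [show (2:ℝ) - 1 = 1 by norm_num, Real.rpow_one]; ring
    simp_rw [hQ0, div_eq_mul_inv, integral_mul_const, hg, one_mul]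
  rw [← hval]
  refine Tendsto.congr' ?_ hdom
  filter_upwards [eventually_gt_atTop (0:ℝ)] with t ht
  exact (hsub t ht).symm

/-- For ℓ > 0, c > 0 with 4c − ℓ² > 0, the kernel
    K(x) = −(2ℓ/√(2π)) ∫₀^∞ y e^{−|x|y}/((c−y²)² + ℓ²y²) dy
           + (2√(2π)/√(4c−ℓ²)) e^{−(√(4c−ℓ²)/2)|x|} cos(ℓx/2)
    satisfies x²K(x) → −2ℓ/(c²√(2π)) as |x| → ∞. -/
theorem stmt_16 (ℓ c : ℝ) (hℓ : 0 < ℓ) (hc : 0 < c) (hd : 0 < 4 * c - ℓ ^ 2) :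
    Tendsto (fun x : ℝ => x ^ 2 *
      (-(2 * ℓ / Real.sqrt (2 * Real.pi)) *
          (∫ y in Set.Ioi (0 : ℝ), y * Real.exp (-|x| * y) / ((c - y ^ 2) ^ 2 + ℓ ^ 2 * y ^ 2))
        + (2 * Real.sqrt (2 * Real.pi) / Real.sqrt (4 * c - ℓ ^ 2)) *
            Real.exp (-(Real.sqrt (4 * c - ℓ ^ 2) / 2) * |x|) * Real.cos (ℓ * x / 2)))
      (cocompact ℝ) (nhds (-(2 * ℓ) / (c ^ 2 * Real.sqrt (2 * Real.pi)))) := by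
  have hπ : (0:ℝ) < Real.sqrt (2 * Real.pi) := Real.sqrt_pos.mpr (by positivity)
  have hα : (0:ℝ) < Real.sqrt (4 * c - ℓ ^ 2) / 2 := by
    have := Real.sqrt_pos.mpr hd; linarith
  set A : ℝ := -(2 * ℓ / Real.sqrt (2 * Real.pi)) with hA
  set C : ℝ := 2 * Real.sqrt (2 * Real.pi) / Real.sqrt (4 * c - ℓ ^ 2) with hC
  set α : ℝ := Real.sqrt (4 * c - ℓ ^ 2) / 2 with hα'
  have hCpos : 0 < C := by
    have := Real.sqrt_pos.mpr hd; positivity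
  have habs : Tendsto (fun x : ℝ => |x|) (cocompact ℝ) atTop := by
    exact (tendsto_norm_cocompact_atTop (E := ℝ)).congr (fun x => Real.norm_eq_abs x)
  -- first piece
  have h1 : Tendsto (fun x : ℝ => A * (x ^ 2 *
      ∫ y in Set.Ioi (0:ℝ), y * Real.exp (-|x| * y) / ((c - y ^ 2) ^ 2 + ℓ ^ 2 * y ^ 2)))
      (cocompact ℝ) (nhds (A * (c ^ 2)⁻¹)) := by
    refine tendsto_const_nhds.mul ?_
    have := (aux_main ℓ c hℓ hc hd).comp habs
    refine this.congr (fun x => ?_)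
    simp [Function.comp, sq_abs]
  -- second piece
  have h2 : Tendsto (fun x : ℝ => x ^ 2 * (C * Real.exp (-α * |x|) * Real.cos (ℓ * x / 2)))
      (cocompact ℝ) (nhds 0) := by
    have hb : Tendsto (fun t : ℝ => C * (t ^ ((2:ℕ):ℝ) * Real.exp (-α * t))) atTop (nhds (C * 0)) :=
      tendsto_const_nhds.mul (tendsto_rpow_mul_exp_neg_mul_atTop_nhds_zero _ α hα)
    rw [mul_zero] at hb
    refine squeeze_zero_norm (fun x => ?_) (hb.comp habs)
    simp only [Function.comp, Real.rpow_natCast, Real.norm_eq_abs]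
    rw [abs_mul, abs_mul, abs_of_nonneg (sq_nonneg x),
        abs_of_pos (mul_pos hCpos (Real.exp_pos _)), ← sq_abs x]
    calc |x| ^ 2 * (C * Real.exp (-α * |x|) * |Real.cos (ℓ * x / 2)|)
        ≤ |x| ^ 2 * (C * Real.exp (-α * |x|) * 1) := by
          gcongr; exact Real.abs_cos_le_one _
      _ = C * (|x| ^ 2 * Real.exp (-α * |x|)) := by ring
  have hsum := h1.add h2
  rw [add_zero] at hsum
  have hconst : A * (c ^ 2)⁻¹ = -(2 * ℓ) / (c ^ 2 * Real.sqrt (2 * Real.pi)) := by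
    rw [hA]; field_simp
  rw [← hconst]
  exact hsum.congr (fun x => by ring)
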